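/- Let s ≥ 2. For all integers 0 ≤ k ≤ n, the following identity holds in ℚ: (C_s(n,k) : ℚ) = ∑ C(k, j_1) C(j_1, j_2) ⋯ C(j_{s-2}, j_{s-1}) · C(n - k - (j_1 + ⋯ + j_{s-2}), j_{s-1}) · 2^{j_1} (3/2)^{j_2} (4/3)^{j_3} ⋯ (s/(s-1))^{j_{s-1}}, where the sum runs over all (s-1)-tuples (j_1, …, j_{s-1}) of natural numbers and C(a,b) denotes the ordinary binomial coefficient (zero when a < 0, b < 0, or b > a). -/

import Mathlib

/-- The quasi-bi^s-nomial coefficients `C_s(n,k)`. -/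
def quasi (s : ℕ) : ℕ → ℤ → ℤ
  | 0, k => if k = 0 then 1 else 0
  | n+1, k =>
    if k < 0 ∨ (n+1 : ℤ) < k then 0
    else quasi s n k + ∑ j ∈ Finset.range s, if j ≤ n then quasi s (n - j) (k - 1) else 0
  termination_by n _ => n
  decreasing_by all_goals omega

/-- Binomial coefficient `C(a,b)` with integer upper argument, zero when `a < 0`
(and, as usual, zero when `b > a ≥ 0`). -/
def ichoose (a : ℤ) (b : ℕ) : ℤ :=
  if a < 0 then 0 else (a.toNat.choose b : ℤ)

/-- The chain of binomial coefficients `C(k, j_1) C(j_1, j_2) ⋯ C(j_{m-1}, j_m)`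
for a tuple `j = (j_1, …, j_m)` (indexed from `0` in Lean). -/
def chain (k : ℕ) {m : ℕ} (j : Fin m → ℕ) : ℕ :=
  ∏ i : Fin m,
    Nat.choose
      (if i.val = 0 then k
       else j ⟨i.val - 1, Nat.lt_of_le_of_lt (Nat.sub_le _ _) i.isLt⟩)
      (j i)

/-- For `s ≥ 2` and `0 ≤ k ≤ n`, in `ℚ`:
`C_s(n,k) = ∑ C(k,j_1) C(j_1,j_2) ⋯ C(j_{s-2},j_{s-1}) C(n-k-(j_1+⋯+j_{s-2}), j_{s-1})
  · 2^{j_1} (3/2)^{j_2} ⋯ (s/(s-1))^{j_{s-1}}`,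
the sum over all `(s-1)`-tuples of natural numbers (indexed from `0` in Lean, so
the paper's `j_i` is `j (i-1)` and the factor for index `i = t+1` is `((t+2)/(t+1))^{j t}`). -/
lemma quasi_gt (s : ℕ) : ∀ (n : ℕ) (k : ℤ), (n : ℤ) < k → quasi s n k = 0
  | 0, k, h => by rw [quasi]; rw [if_neg (by omega)]
  | n+1, k, h => by rw [quasi, if_pos (show k < 0 ∨ (n+1:ℤ) < k from Or.inr (by exact_mod_cast h))]

lemma quasi_neg (s : ℕ) : ∀ (n : ℕ) (k : ℤ), k < 0 → quasi s n k = 0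
  | 0, k, h => by rw [quasi]; rw [if_neg (by omega)]
  | n+1, k, h => by rw [quasi]; simp only [if_pos (Or.inl h)]

lemma quasi_zero (s : ℕ) : ∀ n, quasi s n 0 = 1
  | 0 => by rw [quasi]; simp
  | n+1 => by
    rw [quasi]
    have h1 : ¬((0:ℤ) < 0 ∨ (n+1 : ℤ) < 0) := by omega
    rw [if_neg h1, quasi_zero s n]
    have : ∀ j ∈ Finset.range s, (if j ≤ n then quasi s (n - j) (0 - 1) else 0) = 0 := by
      intro j _
      split
      · exact quasi_neg s _ _ (by norm_num)
      · rfl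
    rw [Finset.sum_congr rfl this]
    simp

lemma quasi_rec (s : ℕ) (n : ℕ) (k : ℤ) (hk : 1 ≤ k) :
    quasi s (n+1) k = quasi s n k + ∑ j ∈ Finset.range s, if j ≤ n then quasi s (n - j) (k - 1) else 0 := by
  rw [quasi]
  split
  · rename_i h
    have hk2 : (n : ℤ) + 2 ≤ k := by omega
    rw [quasi_gt s n k (by omega)]
    have : ∀ j ∈ Finset.range s, (if j ≤ n then quasi s (n - j) (k - 1) else 0) = 0 := by
      intro j _
      split
      · exact quasi_gt s _ _ (by omega)
      · rfl
    rw [Finset.sum_congr rfl this]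
    simp
  · rfl


lemma quasi_zero_pos (s k : ℕ) (hk : 0 < k) : quasi s 0 (k:ℤ) = 0 := by
  have h : ((k:ℕ):ℤ) ≠ 0 := by exact_mod_cast Nat.pos_iff_ne_zero.mp hk
  rw [quasi, if_neg h]

lemma chain_le {a m : ℕ} {j : Fin m → ℕ} (h : chain a j ≠ 0) : ∀ t, j t ≤ a := by
  have key : ∀ i : ℕ, ∀ t : Fin m, t.val = i → j t ≤ a := by
    intro i
    induction i using Nat.strong_induction_on with
    | _ i ih =>
      intro t ht
      have hfac : Nat.choose
          (if t.val = 0 then a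
           else j ⟨t.val - 1, Nat.lt_of_le_of_lt (Nat.sub_le _ _) t.isLt⟩) (j t) ≠ 0 := by
        intro h0
        exact h (Finset.prod_eq_zero (Finset.mem_univ t) h0)
      rw [Ne, Nat.choose_eq_zero_iff, not_lt] at hfac
      by_cases h0 : t.val = 0
      · rwa [if_pos h0] at hfac
      · rw [if_neg h0] at hfac
        have hlt : t.val - 1 < i := by omega
        exact le_trans hfac (ih (t.val - 1) hlt _ rfl)
  exact fun t => key t.val t rfl

lemma chain_zero_of_big {a m : ℕ} {j : Fin m → ℕ} (h : ∃ t, a < j t) : chain a j = 0 := by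
  by_contra hc
  obtain ⟨t, ht⟩ := h
  exact absurd (chain_le hc t) (by omega)

lemma cons_mk (j0 : ℕ) {m : ℕ} (jt : Fin m → ℕ) (v : ℕ) (h : v < m+1) :
    (Fin.cons j0 jt : Fin (m+1) → ℕ) ⟨v, h⟩
      = if hv : v = 0 then j0 else jt ⟨v-1, by omega⟩ := by
  cases v with
  | zero => rw [dif_pos rfl, show (⟨0,h⟩ : Fin (m+1)) = 0 from rfl, Fin.cons_zero]
  | succ v =>
    rw [dif_neg (Nat.succ_ne_zero v),
      show (⟨v+1,h⟩ : Fin (m+1)) = Fin.succ ⟨v, by omega⟩ from rfl, Fin.cons_succ]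
    congr 1

lemma chain_cons (a j0 : ℕ) {m : ℕ} (jt : Fin m → ℕ) :
    chain a (Fin.cons j0 jt) = a.choose j0 * chain j0 jt := by
  unfold chain
  rw [Fin.prod_univ_succ]
  congr 1
  apply Finset.prod_congr rfl
  intro i _
  rw [Fin.cons_succ]
  congr 1
  have hv : (i.succ : Fin (m+1)).val = i.val + 1 := Fin.val_succ i
  rw [if_neg (by omega), cons_mk]
  by_cases h0 : i.val = 0
  · rw [dif_pos (by omega), if_pos h0]
  · rw [dif_neg (by omega), if_neg h0]
    congr 1

lemma finsum_split {M : Type*} [AddCommMonoid M] (B : ℕ) {m : ℕ} (f : (Fin (m+1) → ℕ) → M)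
    (hf : ∀ j : Fin (m+1) → ℕ, (∃ t, B < j t) → f j = 0) :
    (∑ᶠ j : Fin (m+1) → ℕ, f j)
      = ∑ j0 ∈ Finset.range (B+1), ∑ᶠ jt : Fin m → ℕ, f (Fin.cons j0 jt) := by
  have hmem : ∀ (j : Fin (m+1) → ℕ), f j ≠ 0 →
      j ∈ Fintype.piFinset (fun _ : Fin (m+1) => Finset.range (B+1)) := by
    intro j hj
    rw [Fintype.mem_piFinset]
    intro t
    rw [Finset.mem_range]
    by_contra hc
    exact hj (hf j ⟨t, by omega⟩)
  have h1 : (∑ᶠ j : Fin (m+1) → ℕ, f j)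
      = ∑ j ∈ Fintype.piFinset (fun _ : Fin (m+1) => Finset.range (B+1)), f j :=
    finsum_eq_sum_of_support_subset f (fun j hj => Finset.mem_coe.mpr (hmem j hj))
  have h2 : ∀ j0 : ℕ, (∑ᶠ jt : Fin m → ℕ, f (Fin.cons j0 jt))
      = ∑ jt ∈ Fintype.piFinset (fun _ : Fin m => Finset.range (B+1)), f (Fin.cons j0 jt) := by
    intro j0
    apply finsum_eq_sum_of_support_subset
    intro jt hjt
    rw [Finset.mem_coe, Fintype.mem_piFinset]
    intro i
    have := hmem _ hjt
    rw [Fintype.mem_piFinset] at this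
    have h3 := this i.succ
    rwa [Fin.cons_succ] at h3
  rw [h1, Finset.sum_congr rfl (fun j0 _ => h2 j0), ← Finset.sum_product']
  apply Finset.sum_nbij' (i := fun j => ((j 0, Fin.tail j) : ℕ × (Fin m → ℕ)))
    (j := fun p => Fin.cons p.1 p.2)
  · intro j hj
    rw [Fintype.mem_piFinset] at hj
    rw [Finset.mem_product]
    refine ⟨hj 0, ?_⟩
    rw [Fintype.mem_piFinset]
    intro i
    exact hj i.succ
  · intro p hp
    rw [Finset.mem_product] at hp
    rw [Fintype.mem_piFinset]
    intro t
    induction t using Fin.cases with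
    | zero => rw [Fin.cons_zero]; exact hp.1
    | succ i =>
      rw [Fin.cons_succ]
      have := hp.2
      rw [Fintype.mem_piFinset] at this
      exact this i
  · intro j _
    exact Fin.cons_self_tail j
  · intro p _
    simp [Fin.tail_cons]
  · intro j _
    rw [Fin.cons_self_tail]

section PS
open PowerSeries Finset


noncomputable def U (d : ℕ) : ℚ⟦X⟧ := (PowerSeries.invOneSubPow ℚ d).val
noncomputable def geom (s : ℕ) : ℚ⟦X⟧ := ∑ i ∈ Finset.range s, X^i
noncomputable def A (s k : ℕ) : ℚ⟦X⟧ := PowerSeries.mk fun n => ((quasi s n (k:ℤ) : ℤ) : ℚ)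

lemma U_val_inv (d : ℕ) : U d * ((1:ℚ⟦X⟧) - X)^d = 1 := by
  rw [U, ← invOneSubPow_inv_eq_one_sub_pow]
  exact (invOneSubPow ℚ d).val_inv

lemma U_inv_val (d : ℕ) : ((1:ℚ⟦X⟧) - X)^d * U d = 1 := by
  rw [mul_comm]; exact U_val_inv d

lemma U_mul (d e : ℕ) : U d * U e = U (d+e) := by
  calc U d * U e = U d * U e * (((1:ℚ⟦X⟧) - X)^(d+e) * U (d+e)) := by
        rw [U_inv_val]; ring
    _ = (U d * ((1:ℚ⟦X⟧) - X)^d) * (U e * ((1:ℚ⟦X⟧) - X)^e) * U (d+e) := by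
        rw [pow_add]; ring
    _ = U (d+e) := by rw [U_val_inv, U_val_inv]; ring

lemma coeff_U (d c : ℕ) : coeff c (U (d+1)) = (d + c).choose d := by
  rw [U, invOneSubPow_val_succ_eq_mk_add_choose, coeff_mk]

lemma A_succ (s k : ℕ) : A s (k+1) = U 1 * (X * geom s * A s k) := by
  have key : ((1:ℚ⟦X⟧) - X) * A s (k+1) = X * geom s * A s k := by
    have hg : X * geom s * A s k = ∑ i ∈ Finset.range s, X^(i+1) * A s k := by
      rw [geom, Finset.mul_sum, Finset.sum_mul]
      exact Finset.sum_congr rfl fun i _ => by ring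
    ext n
    rw [sub_mul, one_mul, map_sub, hg, map_sum]
    cases n with
    | zero =>
      rw [coeff_zero_X_mul]
      have h0 : ∀ i ∈ Finset.range s, coeff 0 (X^(i+1) * A s k) = 0 := by
        intro i _
        rw [pow_succ, mul_comm (X^i) X, mul_assoc, coeff_zero_X_mul]
      rw [Finset.sum_congr rfl h0, Finset.sum_const_zero, sub_zero, A, coeff_mk,
        quasi_zero_pos s (k+1) (by omega)]
      simp
    | succ n =>
      rw [coeff_succ_X_mul]
      have hterm : ∀ i ∈ Finset.range s, coeff (n+1) (X^(i+1) * A s k)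
          = ((if i ≤ n then quasi s (n - i) (k:ℤ) else 0 : ℤ) : ℚ) := by
        intro i _
        rw [coeff_X_pow_mul']
        by_cases h : i ≤ n
        · rw [if_pos (by omega : i+1 ≤ n+1), if_pos h]
          have : n + 1 - (i+1) = n - i := by omega
          rw [this, A, coeff_mk]
        · rw [if_neg (by omega), if_neg h]; simp
      rw [Finset.sum_congr rfl hterm, ← Int.cast_sum]; simp only [A, coeff_mk]; rw [← Int.cast_sub]
      congr 1
      have := quasi_rec s n (((k+1:ℕ)):ℤ) (by exact_mod_cast Nat.one_le_iff_ne_zero.mpr (by omega))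
      rw [show (((k+1:ℕ)):ℤ)-1 = (k:ℤ) by push_cast; ring] at this
      omega
  calc A s (k+1) = (U 1 * ((1:ℚ⟦X⟧) - X)^1) * A s (k+1) := by rw [U_val_inv]; ring
    _ = U 1 * (((1:ℚ⟦X⟧) - X) * A s (k+1)) := by ring
    _ = U 1 * (X * geom s * A s k) := by rw [key]

lemma A_eq (s : ℕ) : ∀ k, A s k = X^k * geom s ^ k * U (k+1) := by
  intro k
  induction k with
  | zero =>
    simp only [pow_zero, one_mul]
    ext n
    rw [A, coeff_mk, Nat.cast_zero, quasi_zero s n, coeff_U]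
    simp
  | succ k ih =>
    rw [A_succ, ih, show k+1+1 = 1 + (k+1) by ring, ← U_mul 1 (k+1)]
    ring

lemma quasi_coeff (s n k : ℕ) (hk : k ≤ n) :
    ((quasi s n (k:ℤ) : ℤ) : ℚ) = coeff (n-k) (geom s ^ k * U (k+1)) := by
  have h := A_eq s k
  have := congrArg (coeff n) h
  rw [A, coeff_mk, mul_assoc, coeff_X_pow_mul', if_pos hk] at this
  exact this

noncomputable def PP (m : ℕ) (r : ℚ) : ℚ⟦X⟧ := 1 + C r⁻¹ * ∑ i ∈ Finset.range m, X^(i+1)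

noncomputable def Phi (m : ℕ) (r : ℚ) (a : ℕ) : ℚ⟦X⟧ := (PP m r)^a * U (a+1)

lemma PP_succ (m : ℕ) (r : ℚ) (hr : r ≠ 0) (hr1 : r + 1 ≠ 0) :
    PP (m+1) r = ((1:ℚ⟦X⟧) - X) + C ((r+1)/r) * (X * PP m (r+1)) := by
  unfold PP
  rw [Finset.sum_range_succ']
  have hS : ∑ i ∈ Finset.range m, (X:ℚ⟦X⟧)^(i+1+1) = X * ∑ i ∈ Finset.range m, X^(i+1) := by
    rw [Finset.mul_sum]; exact Finset.sum_congr rfl fun i _ => by ring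
  rw [hS]
  set S := ∑ i ∈ Finset.range m, (X:ℚ⟦X⟧)^(i+1) with hSdef
  have e1 : C ((r+1)/r) * C ((r+1)⁻¹) = C r⁻¹ := by
    rw [← map_mul]; congr 1; field_simp
  have e2 : C ((r+1)/r) = 1 + C r⁻¹ := by
    rw [show (r+1)/r = 1 + r⁻¹ by field_simp, map_add, map_one]
  linear_combination (-(X * S)) * e1 + (-X) * e2

lemma Phi_succ (m a : ℕ) (r : ℚ) (hr : r ≠ 0) (hr1 : r + 1 ≠ 0) :
    Phi (m+1) r a = ∑ j ∈ Finset.range (a+1),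
      C ((a.choose j : ℚ) * ((r+1)/r)^j) * (X^j * Phi m (r+1) j) := by
  rw [Phi, PP_succ m r hr hr1, add_comm (((1:ℚ⟦X⟧)) - X) _, add_pow, Finset.sum_mul]
  refine Finset.sum_congr rfl fun j hj => ?_
  have hj' : j ≤ a := by rw [Finset.mem_range] at hj; omega
  have key : U (j+1) = ((1:ℚ⟦X⟧)-X)^(a-j) * U (a+1) := by
    rw [show a + 1 = (a - j) + (j+1) by omega, ← U_mul (a-j) (j+1), ← mul_assoc, U_inv_val, one_mul]
  rw [Phi, map_mul, map_natCast, map_pow, key, mul_pow, mul_pow]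
  ring

lemma Phi_zero (r : ℚ) (a : ℕ) : Phi 0 r a = U (a+1) := by
  simp [Phi, PP]

lemma coeff_Phi_succ (m a b : ℕ) (r : ℚ) (hr : r ≠ 0) (hr1 : r + 1 ≠ 0) :
    coeff b (Phi (m+1) r a) = ∑ j ∈ Finset.range (a+1),
      (a.choose j : ℚ) * ((r+1)/r)^j * (if j ≤ b then coeff (b-j) (Phi m (r+1) j) else 0) := by
  rw [Phi_succ m a r hr hr1, map_sum]
  refine Finset.sum_congr rfl fun j hj => ?_
  rw [coeff_C_mul, coeff_X_pow_mul']

lemma PP_geom (m : ℕ) : PP (m+1) 1 = ∑ i ∈ Finset.range (m+2), (X:ℚ⟦X⟧)^i := by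
  rw [PP, Finset.sum_range_succ' (fun i => (X:ℚ⟦X⟧)^i) (m+1)]
  simp [add_comm]

lemma chain_empty (a : ℕ) (j : Fin 0 → ℕ) : chain a j = 1 := by
  simp [chain]

lemma sum_guard_nonneg {m : ℕ} (c : ℕ) (j : Fin m → ℕ) :
    (0:ℤ) ≤ ∑ t : Fin m, (if (t:ℕ) < c then (j t : ℤ) else 0) :=
  Finset.sum_nonneg fun t _ => by split <;> simp

lemma term_zero_of_neg {m : ℕ} {b : ℤ} (hb : b < 0) (c : ℕ) (j : Fin m → ℕ) (l : Fin m) :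
    (ichoose (b - ∑ t : Fin m, (if (t:ℕ) < c then (j t : ℤ) else 0)) (j l) : ℤ) = 0 := by
  rw [ichoose, if_pos]
  have := sum_guard_nonneg c j
  omega

lemma sum_guard_cons (m j0 : ℕ) (jt : Fin (m+1) → ℕ) :
    (∑ t : Fin (m+2), if (t:ℕ) < m+1 then ((Fin.cons j0 jt : Fin (m+2) → ℕ) t : ℤ) else 0)
      = (j0:ℤ) + ∑ t : Fin (m+1), (if (t:ℕ) < m then (jt t : ℤ) else 0) := by
  rw [Fin.sum_univ_succ]
  congr 1
  · simp

lemma prod_ratio_cons (m r j0 : ℕ) (jt : Fin (m+1) → ℕ) :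
    (∏ t : Fin (m+2), (((r:ℚ) + ((t:ℕ):ℚ) + 1)/((r:ℚ) + ((t:ℕ):ℚ)))^((Fin.cons j0 jt : Fin (m+2) → ℕ) t))
      = (((r:ℚ)+1)/(r:ℚ))^j0
        * ∏ t : Fin (m+1), ((((r+1:ℕ):ℚ) + ((t:ℕ):ℚ) + 1)/(((r+1:ℕ):ℚ) + ((t:ℕ):ℚ)))^(jt t) := by
  rw [Fin.prod_univ_succ]
  congr 1
  · norm_num
  · apply Finset.prod_congr rfl
    intro i _
    rw [Fin.cons_succ]
    congr 1
    congr 1 <;> · push_cast [Fin.val_succ]; ring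

lemma main (m : ℕ) : ∀ (r a : ℕ) (b : ℤ), 1 ≤ r →
    (∑ᶠ j : Fin (m+1) → ℕ, (chain a j : ℚ) *
       ((ichoose (b - ∑ t : Fin (m+1), (if (t:ℕ) < m then (j t : ℤ) else 0)) (j (Fin.last m)) : ℤ) : ℚ) *
       ∏ t : Fin (m+1), (((r:ℚ) + ((t:ℕ):ℚ) + 1) / ((r:ℚ) + ((t:ℕ):ℚ))) ^ (j t))
    = if b < 0 then 0 else PowerSeries.coeff b.toNat (Phi (m+1) (r:ℚ) a) := by
  induction m with
  | zero =>
    intro r a b hr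
    have hr0 : (r:ℚ) ≠ 0 := Nat.cast_ne_zero.mpr (by omega)
    have hr1 : (r:ℚ) + 1 ≠ 0 := by positivity
    by_cases hb : b < 0
    · rw [if_pos hb]
      rw [finsum_congr (fun j => ?_), finsum_zero]
      rw [term_zero_of_neg hb 0 j (Fin.last 0)]
      simp
    rw [if_neg hb, coeff_Phi_succ 0 a b.toNat r hr0 hr1]
    rw [finsum_split a _ (fun j hj => by rw [chain_zero_of_big hj]; simp)]
    apply Finset.sum_congr rfl
    intro j0 hj0
    rw [finsum_unique, chain_cons, chain_empty, Phi_zero, coeff_U]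
    simp only [Fin.sum_univ_succ, Fin.sum_univ_zero, Fin.prod_univ_succ, Fin.prod_univ_zero,
      show (Fin.last 0) = 0 from rfl, Fin.cons_zero, Fin.cons_succ, Fin.val_zero, Nat.cast_zero,
      add_zero, show ¬((0:ℕ) < 0) from by omega, if_false, sub_zero, mul_one]
    rw [ichoose, if_neg hb]
    by_cases hj : j0 ≤ b.toNat
    · rw [if_pos hj, show j0 + (b.toNat - j0) = b.toNat by omega]
      push_cast
      ring
    · rw [if_neg hj, Nat.choose_eq_zero_of_lt (show b.toNat < j0 by omega)]
      push_cast
      ring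
  | succ m ih =>
    intro r a b hr
    have hr0 : (r:ℚ) ≠ 0 := Nat.cast_ne_zero.mpr (by omega)
    have hr1 : (r:ℚ) + 1 ≠ 0 := by positivity
    by_cases hb : b < 0
    · rw [if_pos hb]
      rw [finsum_congr (fun j => ?_), finsum_zero]
      rw [term_zero_of_neg hb (m+1) j (Fin.last (m+1))]
      simp
    rw [if_neg hb, coeff_Phi_succ (m+1) a b.toNat r hr0 hr1]
    rw [finsum_split a _ (fun j hj => by rw [chain_zero_of_big hj]; simp)]
    apply Finset.sum_congr rfl
    intro j0 hj0
    have hinner : ∀ jt : Fin (m+1) → ℕ,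
        ((chain a (Fin.cons j0 jt) : ℚ) *
          ((ichoose (b - ∑ t : Fin (m+2), (if (t:ℕ) < m+1 then ((Fin.cons j0 jt : Fin (m+2) → ℕ) t : ℤ) else 0))
            ((Fin.cons j0 jt : Fin (m+2) → ℕ) (Fin.last (m+1))) : ℤ) : ℚ) *
          ∏ t : Fin (m+2), (((r:ℚ) + ((t:ℕ):ℚ) + 1) / ((r:ℚ) + ((t:ℕ):ℚ))) ^ ((Fin.cons j0 jt : Fin (m+2) → ℕ) t))
        = ((a.choose j0 : ℚ) * (((r:ℚ)+1)/(r:ℚ))^j0) *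
            ((chain j0 jt : ℚ) *
            ((ichoose ((b - j0) - ∑ t : Fin (m+1), (if (t:ℕ) < m then (jt t : ℤ) else 0)) (jt (Fin.last m)) : ℤ) : ℚ) *
            ∏ t : Fin (m+1), ((((r+1:ℕ):ℚ) + ((t:ℕ):ℚ) + 1) / (((r+1:ℕ):ℚ) + ((t:ℕ):ℚ))) ^ (jt t)) := by
      intro jt
      rw [chain_cons, sum_guard_cons, prod_ratio_cons,
        show (Fin.cons j0 jt : Fin (m+2) → ℕ) (Fin.last (m+1)) = jt (Fin.last m) by
          rw [← Fin.succ_last, Fin.cons_succ],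
        sub_add_eq_sub_sub]
      push_cast
      ring
    rw [finsum_congr hinner]
    have hGfin : (Function.support (fun jt : Fin (m+1) → ℕ =>
        (chain j0 jt : ℚ) *
          ((ichoose ((b - j0) - ∑ t : Fin (m+1), (if (t:ℕ) < m then (jt t : ℤ) else 0)) (jt (Fin.last m)) : ℤ) : ℚ) *
          ∏ t : Fin (m+1), ((((r+1:ℕ):ℚ) + ((t:ℕ):ℚ) + 1) / (((r+1:ℕ):ℚ) + ((t:ℕ):ℚ))) ^ (jt t))).Finite := by
      apply Set.Finite.subset (Fintype.piFinset (fun _ : Fin (m+1) => Finset.range (j0+1))).finite_toSet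
      intro jt hjt
      rw [Finset.mem_coe, Fintype.mem_piFinset]
      intro i
      rw [Finset.mem_range]
      have hc : chain j0 jt ≠ 0 := by
        intro h0
        apply hjt
        simp [Function.mem_support, h0]
      have := chain_le hc i
      omega
    rw [← mul_finsum, ih (r+1) j0 (b - (j0:ℤ)) (by omega)]
    push_cast
    by_cases hj : j0 ≤ b.toNat
    · rw [if_neg (by omega : ¬ b - (j0:ℤ) < 0), if_pos hj,
        show (b - (j0:ℤ)).toNat = b.toNat - j0 by omega]
      try ring
    · rw [if_pos (by omega : b - (j0:ℤ) < 0), if_neg hj]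
      try ring

lemma Phi_geom (m k : ℕ) : Phi (m+1) 1 k = geom (m+2) ^ k * U (k+1) := by
  rw [Phi, PP_geom, geom]

theorem quasi_nested_rational_identity (s n k : ℕ) (hs : 2 ≤ s) (hk : k ≤ n) :
    (quasi s n (k : ℤ) : ℚ) =
      ∑ᶠ j : Fin (s - 1) → ℕ,
        (chain k j : ℚ) *
          (ichoose ((n : ℤ) - k - ∑ t : Fin (s - 1), (if t.val < s - 2 then (j t : ℤ) else 0))
            (j ⟨s - 2, by omega⟩) : ℚ) *
          ∏ t : Fin (s - 1), ((((t : ℕ) : ℚ) + 2) / (((t : ℕ) : ℚ) + 1)) ^ (j t) := by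
  obtain ⟨m, rfl⟩ : ∃ m, s = m + 2 := ⟨s - 2, by omega⟩
  have hkn : ((k:ℤ)) ≤ (n:ℤ) := by exact_mod_cast hk
  have H := main m 1 k ((n:ℤ) - (k:ℤ)) le_rfl
  rw [if_neg (by omega), show ((n:ℤ) - (k:ℤ)).toNat = n - k by omega, Nat.cast_one] at H
  rw [quasi_coeff (m+2) n k hk, ← Phi_geom m k, ← H]
  apply finsum_congr
  intro j
  congr 1
  apply Finset.prod_congr rfl
  intro t _
  congr 1
  congr 1 <;> ring
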